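/- Let H₀ ∈ (0, ∞) be the unique zero of the derivative of A(H) = 8π·(1/(4H²+1) + (4H²/(4H²+1)^{3/2})·artanh(1/√(4H²+1))) on (0, ∞). Then the derivative A′(H) is strictly positive for all H with 0 < H < H₀, and strictly negative for all H with H > H₀. -/

import Mathlib

open Real Set

/-- The inverse hyperbolic tangent. -/
noncomputable def artanh (x : ℝ) : ℝ := (1 / 2) * Real.log ((1 + x) / (1 - x))

/-- Pedrosa's formula for the area of the rotational CMC sphere of mean
curvature `H` in `S² × ℝ`. -/
noncomputable def pedrosaArea (H : ℝ) : ℝ :=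
  8 * Real.pi * (1 / (4 * H ^ 2 + 1) +
    (4 * H ^ 2 / (4 * H ^ 2 + 1) ^ ((3 : ℝ) / 2)) *
      _root_.artanh (1 / Real.sqrt (4 * H ^ 2 + 1)))

lemma hasDerivAt_artanh {x : ℝ} (h1 : -1 < x) (h2 : x < 1) :
    HasDerivAt _root_.artanh (1 / (1 - x ^ 2)) x := by
  have hA : HasDerivAt (fun y : ℝ => (1/2) * (Real.log (1 + y) - Real.log (1 - y)))
      (1 / (1 - x ^ 2)) x := by
    have l1 : HasDerivAt (fun y : ℝ => Real.log (1 + y)) (1 / (1 + x)) x := by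
      have h : HasDerivAt (fun y : ℝ => 1 + y) 1 x := (hasDerivAt_id x).const_add 1
      simpa using h.log (by linarith)
    have l2 : HasDerivAt (fun y : ℝ => Real.log (1 - y)) (-1 / (1 - x)) x := by
      have h : HasDerivAt (fun y : ℝ => 1 - y) (-1) x := by
        exact (hasDerivAt_id' x).const_sub 1
      simpa using h.log (by linarith)
    have := (l1.sub l2).const_mul (1/2 : ℝ)
    refine this.congr_deriv ?_
    have n1 : (1:ℝ) + x ≠ 0 := by linarith
    have n2 : (1:ℝ) - x ≠ 0 := by linarith
    have n3 : (1:ℝ) - x ^ 2 ≠ 0 := by nlinarith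
    field_simp
    ring
  apply hA.congr_of_eventuallyEq
  filter_upwards [Ioo_mem_nhds h1 h2] with y hy
  unfold _root_.artanh
  rw [Real.log_div (by nlinarith [hy.1] : (1:ℝ) + y ≠ 0) (by nlinarith [hy.2] : (1:ℝ) - y ≠ 0)]

noncomputable def pedrosaDeriv (H : ℝ) : ℝ :=
  32 * Real.pi * H / (Real.sqrt (4 * H ^ 2 + 1)) ^ 5 *
    (-3 * Real.sqrt (4 * H ^ 2 + 1) +
      2 * (1 - 2 * H ^ 2) * _root_.artanh (1 / Real.sqrt (4 * H ^ 2 + 1)))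

lemma hasDerivAt_pedrosa {H : ℝ} (hH : 0 < H) :
    HasDerivAt pedrosaArea (pedrosaDeriv H) H := by
  set t : ℝ := 4 * H ^ 2 + 1 with ht_def
  have ht1 : 1 < t := by nlinarith
  have ht0 : (0:ℝ) < t := by linarith
  set u : ℝ := Real.sqrt t with hu_def
  have hu2 : u ^ 2 = t := Real.sq_sqrt ht0.le
  have hu1 : 1 < u := by
    nlinarith [Real.sqrt_nonneg t, hu2]
  have hu0 : (0:ℝ) < u := by linarith
  -- derivative of t
  have ht : HasDerivAt (fun H : ℝ => 4 * H ^ 2 + 1) (8 * H) H := by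
    have := ((hasDerivAt_pow 2 H).const_mul (4:ℝ)).add_const (1:ℝ)
    refine this.congr_deriv ?_
    ring
  -- derivative of sqrt t
  have hsqrt : HasDerivAt (fun H : ℝ => Real.sqrt (4 * H ^ 2 + 1)) (8 * H / (2 * u)) H :=
    ht.sqrt (by positivity)
  -- derivative of s = 1 / sqrt t
  have hs : HasDerivAt (fun H : ℝ => 1 / Real.sqrt (4 * H ^ 2 + 1))
      (-(8 * H / (2 * u)) / u ^ 2) H := by
    simp only [one_div]; exact hsqrt.inv hu0.ne'
  have hslt : 1 / u < 1 := by
    rw [div_lt_one hu0]; exact hu1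
  have hsgt : -1 < 1 / u := by
    have : (0:ℝ) < 1 / u := by positivity
    linarith
  -- derivative of _root_.artanh (1/sqrt t)
  have ha : HasDerivAt (fun H : ℝ => _root_.artanh (1 / Real.sqrt (4 * H ^ 2 + 1)))
      ((1 / (1 - (1/u) ^ 2)) * (-(8 * H / (2 * u)) / u ^ 2)) H :=
    (hasDerivAt_artanh hsgt hslt).comp (h₂ := _root_.artanh) H hs
  -- derivative of 1/t
  have h1 : HasDerivAt (fun H : ℝ => 1 / (4 * H ^ 2 + 1)) (-(8 * H) / t ^ 2) H := by
    simp only [one_div]; exact ht.inv ht0.ne'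
  -- derivative of t ^ (3/2)
  have h3 : HasDerivAt (fun H : ℝ => (4 * H ^ 2 + 1) ^ ((3:ℝ)/2))
      (8 * H * ((3:ℝ)/2) * t ^ ((3:ℝ)/2 - 1)) H :=
    ht.rpow_const (Or.inl (by positivity))
  have h2 : HasDerivAt (fun H : ℝ => 4 * H ^ 2) (8 * H) H := by
    have := (hasDerivAt_pow 2 H).const_mul (4:ℝ)
    refine this.congr_deriv ?_
    ring
  have hq : HasDerivAt (fun H : ℝ => 4 * H ^ 2 / (4 * H ^ 2 + 1) ^ ((3:ℝ)/2))
      ((8 * H * t ^ ((3:ℝ)/2) - 4 * H ^ 2 * (8 * H * ((3:ℝ)/2) * t ^ ((3:ℝ)/2 - 1))) /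
        (t ^ ((3:ℝ)/2)) ^ 2) H :=
    h2.div h3 (by positivity)
  have hprod := hq.mul ha
  have htotal := (h1.add hprod).const_mul (8 * Real.pi)
  have heq : pedrosaArea = fun H : ℝ => 8 * Real.pi * (1 / (4 * H ^ 2 + 1) +
      (4 * H ^ 2 / (4 * H ^ 2 + 1) ^ ((3:ℝ)/2)) * _root_.artanh (1 / Real.sqrt (4 * H ^ 2 + 1))) := rfl
  rw [heq]
  refine htotal.congr_deriv ?_
  -- now pure algebra
  have e1 : t ^ ((3:ℝ)/2) = u ^ 3 := by
    rw [hu_def, Real.sqrt_eq_rpow, ← Real.rpow_natCast (t ^ ((1:ℝ)/2)) 3,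
      ← Real.rpow_mul ht0.le]
    norm_num
  have e2 : t ^ ((3:ℝ)/2 - 1) = u := by
    rw [hu_def, Real.sqrt_eq_rpow]
    norm_num
  rw [pedrosaDeriv]
  rw [show Real.sqrt (4 * H ^ 2 + 1) = u from rfl, e1, e2]
  have hden : (1:ℝ) - (1/u)^2 ≠ 0 := by
    have : (1/u)^2 < 1 := by
      rw [div_pow, one_pow, div_lt_one (by positivity)]
      nlinarith
    linarith
  have h4 : H ^ 2 = (u ^ 2 - 1) / 4 := by rw [hu2]; ring
  have hden' : u ^ 2 - 1 ≠ 0 := by nlinarith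
  have e3 : 1 - (1/u) ^ 2 = (u ^ 2 - 1) / u ^ 2 := by field_simp
  rw [e3, ← hu2, h4]
  field_simp
  ring

lemma artanh_pos {x : ℝ} (h0 : 0 < x) (h1 : x < 1) : 0 < _root_.artanh x := by
  unfold _root_.artanh
  have : 1 < (1 + x) / (1 - x) := by
    rw [lt_div_iff₀ (by linarith)]; linarith
  have := Real.log_pos this
  linarith

lemma sqrt_facts {H : ℝ} (hH : 0 < H) :
    1 < Real.sqrt (4 * H ^ 2 + 1) ∧ Real.sqrt (4 * H ^ 2 + 1) ^ 2 = 4 * H ^ 2 + 1 := by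
  have h0 : (0:ℝ) < 4 * H ^ 2 + 1 := by positivity
  have h2 : Real.sqrt (4 * H ^ 2 + 1) ^ 2 = 4 * H ^ 2 + 1 := Real.sq_sqrt h0.le
  refine ⟨?_, h2⟩
  nlinarith [Real.sqrt_nonneg (4 * H ^ 2 + 1)]

lemma pedrosaDeriv_pos {H : ℝ} (h0 : 0 < H) (h1 : H ≤ 1/10) : 0 < pedrosaDeriv H := by
  obtain ⟨hu1, hu2⟩ := sqrt_facts h0
  set u := Real.sqrt (4 * H ^ 2 + 1) with hu_def
  have hu0 : (0:ℝ) < u := by linarith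
  have hub : u ≤ 51/50 := by nlinarith
  -- lower bound for _root_.artanh (1/u)
  have harg : (1 + 1/u) / (1 - 1/u) = (u + 1) / (u - 1) := by
    rw [div_eq_div_iff]
    · field_simp
    · have : 1/u < 1 := by rw [div_lt_one hu0]; exact hu1
      linarith
    · linarith
  have hratio : (64:ℝ) ≤ (u + 1) / (u - 1) := by
    rw [le_div_iff₀ (by linarith)]
    nlinarith
  have hart : 6 * Real.log 2 ≤ Real.log ((1 + 1/u) / (1 - 1/u)) := by
    rw [harg]
    calc 6 * Real.log 2 = Real.log (2 ^ 6) := by rw [Real.log_pow]; push_cast; ring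
    _ ≤ Real.log ((u + 1) / (u - 1)) := Real.log_le_log (by norm_num) (by norm_num at hratio ⊢; linarith)
  have hartanh : 3 * Real.log 2 ≤ _root_.artanh (1/u) := by
    unfold _root_.artanh; linarith
  have hlog2 : (0.6931:ℝ) < Real.log 2 := by
    have := Real.log_two_gt_d9; linarith
  -- sign
  unfold pedrosaDeriv
  rw [← hu_def]
  apply mul_pos
  · positivity
  · have h2H : 2 * (1 - 2 * H ^ 2) ≥ 2 * (1 - 2 * (1/10)^2) := by nlinarith
    have key : 2 * (1 - 2 * H ^ 2) * _root_.artanh (1/u) ≥ (49/25) * (3 * Real.log 2) := by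
      have hpos : (0:ℝ) < 2 * (1 - 2 * H ^ 2) := by nlinarith
      calc 2 * (1 - 2 * H ^ 2) * _root_.artanh (1/u) ≥ 2 * (1 - 2 * H ^ 2) * (3 * Real.log 2) :=
        mul_le_mul_of_nonneg_left hartanh hpos.le
      _ ≥ (49/25) * (3 * Real.log 2) := by
        apply mul_le_mul_of_nonneg_right (by nlinarith) (by nlinarith)
    nlinarith

lemma pedrosaDeriv_neg {H : ℝ} (h1 : 1 ≤ H) : pedrosaDeriv H < 0 := by
  have h0 : (0:ℝ) < H := by linarith
  obtain ⟨hu1, hu2⟩ := sqrt_facts h0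
  set u := Real.sqrt (4 * H ^ 2 + 1) with hu_def
  have hu0 : (0:ℝ) < u := by linarith
  have ha : 0 < _root_.artanh (1/u) := artanh_pos (by positivity) (by rw [div_lt_one hu0]; exact hu1)
  unfold pedrosaDeriv
  rw [← hu_def]
  apply mul_neg_of_pos_of_neg
  · positivity
  · have : 2 * (1 - 2 * H ^ 2) * _root_.artanh (1/u) < 0 := by
      apply mul_neg_of_neg_of_pos (by nlinarith) ha
    nlinarith

lemma pedrosaDeriv_contOn : ContinuousOn pedrosaDeriv (Ioi 0) := by
  intro H hH
  apply ContinuousAt.continuousWithinAt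
  have h0 : (0:ℝ) < H := hH
  obtain ⟨hu1, hu2⟩ := sqrt_facts h0
  set u := Real.sqrt (4 * H ^ 2 + 1) with hu_def
  have hu0 : (0:ℝ) < u := by linarith
  have c1 : ContinuousAt (fun x : ℝ => Real.sqrt (4 * x ^ 2 + 1)) H :=
    (Real.continuous_sqrt.comp (by continuity)).continuousAt
  have c2 : ContinuousAt (fun x : ℝ => 1 / Real.sqrt (4 * x ^ 2 + 1)) H :=
    (continuousAt_const.div c1 (by positivity))
  have c3 : ContinuousAt _root_.artanh (1 / u) :=
    (hasDerivAt_artanh (neg_one_lt_zero.trans (one_div_pos.mpr hu0))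
      (by rw [div_lt_one hu0]; exact hu1)).continuousAt
  have c4 : ContinuousAt (fun x : ℝ => _root_.artanh (1 / Real.sqrt (4 * x ^ 2 + 1))) H :=
    ContinuousAt.comp (g := _root_.artanh) (f := fun x : ℝ => 1 / Real.sqrt (4 * x ^ 2 + 1)) c3 c2
  unfold pedrosaDeriv
  apply ContinuousAt.mul
  · exact ContinuousAt.div (by fun_prop) (c1.pow 5) (by positivity)
  · exact ((continuousAt_const.mul c1)).add ((by fun_prop : ContinuousAt
      (fun x : ℝ => 2 * (1 - 2 * x ^ 2)) H).mul c4)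

/-- If `H₀` is the unique zero of `A'` in `(0, ∞)`, then `A' > 0` on `(0, H₀)`
and `A' < 0` on `(H₀, ∞)`. -/
theorem pedrosaArea_deriv_sign (H₀ : ℝ) (hH₀ : H₀ ∈ Set.Ioi (0 : ℝ))
    (hzero : deriv pedrosaArea H₀ = 0)
    (huniq : ∀ H ∈ Set.Ioi (0 : ℝ), deriv pedrosaArea H = 0 → H = H₀) :
    (∀ H : ℝ, 0 < H → H < H₀ → 0 < deriv pedrosaArea H) ∧
      (∀ H : ℝ, H₀ < H → deriv pedrosaArea H < 0) := by
  have hd : ∀ H : ℝ, 0 < H → deriv pedrosaArea H = pedrosaDeriv H :=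
    fun H hH => (hasDerivAt_pedrosa hH).deriv
  have contIcc : ∀ a b : ℝ, 0 < a → ContinuousOn (deriv pedrosaArea) (Icc a b) := by
    intro a b ha
    have hsub : Icc a b ⊆ Ioi 0 := fun x hx => lt_of_lt_of_le ha hx.1
    exact (pedrosaDeriv_contOn.mono hsub).congr (fun x hx => hd x (hsub hx))
  have hH₀0 : (0:ℝ) < H₀ := hH₀
  constructor
  · intro H hH0 hHH₀
    by_contra hcon
    push_neg at hcon
    have hne : deriv pedrosaArea H ≠ 0 := by
      intro h
      exact absurd (huniq H hH0 h) (ne_of_lt hHH₀)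
    have hneg : deriv pedrosaArea H < 0 := lt_of_le_of_ne hcon hne
    set a : ℝ := min H (1/10) / 2 with ha_def
    have ha0 : 0 < a := by
      apply div_pos _ (by norm_num)
      exact lt_min hH0 (by norm_num)
    have haH : a < H := by
      have : min H (1/10) ≤ H := min_le_left _ _
      have := lt_min hH0 (show (0:ℝ) < 1/10 by norm_num)
      linarith [min_le_left H (1/10:ℝ)]
    have ha10 : a ≤ 1/10 := by
      have := min_le_right H (1/10:ℝ)
      have := lt_min hH0 (show (0:ℝ) < 1/10 by norm_num)
      linarith
    have hfa : 0 < deriv pedrosaArea a := by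
      rw [hd a ha0]; exact pedrosaDeriv_pos ha0 ha10
    have := intermediate_value_Ioo' haH.le (contIcc a H ha0)
    have h0mem : (0:ℝ) ∈ Ioo (deriv pedrosaArea H) (deriv pedrosaArea a) := ⟨hneg, hfa⟩
    obtain ⟨c, hc, hc0⟩ := this h0mem
    have hcH₀ : c = H₀ := huniq c (lt_trans ha0 hc.1) hc0
    have : c < H₀ := lt_trans hc.2 hHH₀
    linarith
  · intro H hH
    have hH0 : 0 < H := lt_trans hH₀0 hH
    by_contra hcon
    push_neg at hcon
    have hne : deriv pedrosaArea H ≠ 0 := by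
      intro h
      exact absurd (huniq H hH0 h) (ne_of_gt hH)
    have hpos : 0 < deriv pedrosaArea H := lt_of_le_of_ne hcon (Ne.symm hne)
    set b : ℝ := max H 1 + 1 with hb_def
    have hHb : H < b := by
      have := le_max_left H 1; linarith
    have hb1 : (1:ℝ) ≤ b := by
      have := le_max_right H 1; linarith
    have hfb : deriv pedrosaArea b < 0 := by
      rw [hd b (by linarith)]; exact pedrosaDeriv_neg hb1
    have := intermediate_value_Ioo' hHb.le (contIcc H b hH0)
    have h0mem : (0:ℝ) ∈ Ioo (deriv pedrosaArea b) (deriv pedrosaArea H) := ⟨hfb, hpos⟩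
    obtain ⟨c, hc, hc0⟩ := this h0mem
    have hcH₀ : c = H₀ := huniq c (lt_trans hH0 hc.1) hc0
    linarith [hc.1]
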